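/- If a forward-complete system satisfies the estimate ∫₀^t α(|x(s,ξ,u)|) ds ≤ χ(|ξ| + ∫₀^t σ(|u(s)|) ds) along all trajectories (for some α, χ, σ ∈ K∞), and also the forward-completeness bound |x(t,ξ,u)| ≤ κ₁(t) + κ₂(|ξ|) + κ₃(∫₀^t γ(|u(s)|) ds) + c with κᵢ ∈ K∞, c ≥ 0, then for any r > 0, any initial state with |ξ| ≤ r, and any input with ∫₀^∞ max{γ,σ}(|u(s)|) ds ≤ r, the trajectory satisfies |x(t,ξ,u)| ≤ κ₁(χ(2r)/α(r)) + κ₂(r) + κ₃(r) + c for all t ≥ 0. -/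

import Mathlib

open MeasureTheory

/-- A function of class `K`: continuous, strictly increasing on `[0,∞)`, zero at zero. -/
def ClassK (f : ℝ → ℝ) : Prop :=
  ContinuousOn f (Set.Ici 0) ∧ StrictMonoOn f (Set.Ici 0) ∧ f 0 = 0

/-- A function of class `K∞`: class `K` and unbounded. -/
def ClassKInf (f : ℝ → ℝ) : Prop :=
  ClassK f ∧ Filter.Tendsto f Filter.atTop Filter.atTop

/-- A function of class `KL`. -/
def ClassKL (β : ℝ → ℝ → ℝ) : Prop :=
  (∀ t, 0 ≤ t → ClassK (fun r => β r t)) ∧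
  (∀ r, 0 ≤ r → AntitoneOn (fun t => β r t) (Set.Ici 0) ∧
    Filter.Tendsto (fun t => β r t) Filter.atTop (nhds 0))

lemma classK_mono {f : ℝ → ℝ} (hf : ClassK f) : MonotoneOn f (Set.Ici 0) :=
  hf.2.1.monotoneOn

lemma classK_le {f : ℝ → ℝ} (hf : ClassK f) {x y : ℝ} (hx : 0 ≤ x) (hxy : x ≤ y) :
    f x ≤ f y :=
  classK_mono hf (Set.mem_Ici.mpr hx) (Set.mem_Ici.mpr (hx.trans hxy)) hxy

lemma classK_nonneg {f : ℝ → ℝ} (hf : ClassK f) {x : ℝ} (hx : 0 ≤ x) : 0 ≤ f x := by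
  have := classK_le hf le_rfl hx
  rwa [hf.2.2] at this

/-- If a forward-complete system satisfies an "integral-to-integral" estimate
∫₀^t α(|x(s)|) ds ≤ χ(|ξ| + ∫₀^t σ(|u(s)|) ds) along all trajectories, and the
forward-completeness bound |x(t)| ≤ κ₁(t) + κ₂(|ξ|) + κ₃(∫₀^t γ(|u|)) + c, then for any
r > 0, |ξ| ≤ r and ∫₀^∞ max{γ,σ}(|u|) ≤ r imply
|x(t)| ≤ κ₁(χ(2r)/α(r)) + κ₂(r) + κ₃(r) + c for all t ≥ 0. -/
theorem stmt12 {E F : Type*} [NormedAddCommGroup E] [NormedAddCommGroup F]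
    (X : E → (ℝ → F) → ℝ → E)
    (α χ σ γ κ₁ κ₂ κ₃ : ℝ → ℝ) (c : ℝ)
    (hα : ClassKInf α) (hχ : ClassKInf χ) (hσ : ClassKInf σ) (hγ : ClassKInf γ)
    (hκ₁ : ClassKInf κ₁) (hκ₂ : ClassKInf κ₂) (hκ₃ : ClassKInf κ₃) (hc : 0 ≤ c)
    (hX0 : ∀ ξ u, X ξ u 0 = ξ)
    (hcont : ∀ ξ u, ContinuousOn (fun t => X ξ u t) (Set.Ici 0))
    (hshift : ∀ ξ u t s, 0 ≤ t → 0 ≤ s →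
      X ξ u (t + s) = X (X ξ u t) (fun τ => u (τ + t)) s)
    (hint : ∀ (ξ : E) (u : ℝ → F) (t : ℝ), 0 ≤ t →
      (∫ s in (0:ℝ)..t, α ‖X ξ u s‖) ≤ χ (‖ξ‖ + ∫ s in (0:ℝ)..t, σ ‖u s‖))
    (hfc : ∀ (ξ : E) (u : ℝ → F) (t : ℝ), 0 ≤ t →
      ‖X ξ u t‖ ≤ κ₁ t + κ₂ ‖ξ‖ + κ₃ (∫ s in (0:ℝ)..t, γ ‖u s‖) + c)
    (r : ℝ) (hr : 0 < r) (ξ : E) (u : ℝ → F) (hξ : ‖ξ‖ ≤ r)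
    (hui : IntegrableOn (fun s => max (γ ‖u s‖) (σ ‖u s‖)) (Set.Ioi 0))
    (hur : (∫ s in Set.Ioi (0:ℝ), max (γ ‖u s‖) (σ ‖u s‖)) ≤ r) :
    ∀ t, 0 ≤ t →
      ‖X ξ u t‖ ≤ κ₁ (χ (2 * r) / α r) + κ₂ r + κ₃ r + c := by
  intro t ht
  -- the set of times in [0,t] where the trajectory is within radius r
  set S : Set ℝ := Set.Icc 0 t ∩ {s | ‖X ξ u s‖ ≤ r} with hSdef
  have hS0 : (0:ℝ) ∈ S := ⟨⟨le_rfl, ht⟩, by simpa [hX0] using hξ⟩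
  have hXc : ContinuousOn (fun s => ‖X ξ u s‖) (Set.Icc 0 t) :=
    ((hcont ξ u).mono Set.Icc_subset_Ici_self).norm
  have hScl : IsClosed S := by
    have h := hXc.preimage_isClosed_of_isClosed isClosed_Icc (isClosed_Iic (a := r))
    convert h using 1
    rfl
  have hSsub : S ⊆ Set.Icc 0 t := fun s hs => hs.1
  have hScpt : IsCompact S := isCompact_Icc.of_isClosed_subset hScl hSsub
  set τ := sSup S with hτdef
  have hτS : τ ∈ S := hScpt.sSup_mem ⟨0, hS0⟩
  have hτ0 : 0 ≤ τ := hτS.1.1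
  have hτt : τ ≤ t := hτS.1.2
  have hτr : ‖X ξ u τ‖ ≤ r := hτS.2
  have hbdd : BddAbove S := hScpt.bddAbove
  have hgt : ∀ s ∈ Set.Ioc τ t, r ≤ ‖X ξ u s‖ := by
    intro s hs
    by_contra hlt
    push_neg at hlt
    have hsS : s ∈ S := ⟨⟨hτ0.trans hs.1.le, hs.2⟩, hlt.le⟩
    exact absurd (le_csSup hbdd hsS) (not_le.mpr hs.1)
  -- positivity of α r
  have hαr : 0 < α r := by
    have := hα.1.2.1 Set.self_mem_Ici (Set.mem_Ici.mpr hr.le) hr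
    rwa [hα.1.2.2] at this
  -- continuity and integrability of s ↦ α ‖X ξ u s‖
  have hαXc : ContinuousOn (fun s => α ‖X ξ u s‖) (Set.Icc 0 t) :=
    hα.1.1.comp hXc (fun s _ => Set.mem_Ici.mpr (norm_nonneg _))
  have hαint : IntegrableOn (fun s => α ‖X ξ u s‖) (Set.Ioc τ t) :=
    ((hαXc.mono (Set.Icc_subset_Icc hτ0 le_rfl)).integrableOn_Icc).mono_set
      Set.Ioc_subset_Icc_self
  -- lower bound
  have hlow : α r * (t - τ) ≤ ∫ s in Set.Ioc τ t, α ‖X ξ u s‖ := by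
    have h := setIntegral_ge_of_const_le (c := α r) measurableSet_Ioc
      (by simp [Real.volume_Ioc]) (fun s hs => classK_le hα.1 hr.le (hgt s hs)) hαint
    rw [measureReal_def, Real.volume_Ioc, ENNReal.toReal_ofReal (sub_nonneg.mpr hτt), smul_eq_mul] at h
    linarith
  -- the tail integral is bounded by the full integral
  have hII : (∫ s in Set.Ioc τ t, α ‖X ξ u s‖) ≤ ∫ s in (0:ℝ)..t, α ‖X ξ u s‖ := by
    rw [intervalIntegral.integral_of_le ht]
    exact setIntegral_mono_set (hαXc.integrableOn_Icc.mono_set Set.Ioc_subset_Icc_self)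
      (Filter.Eventually.of_forall fun s => classK_nonneg hα.1 (norm_nonneg _))
      ((Set.Ioc_subset_Ioc_left hτ0).eventuallyLE)
  -- bounding the σ integral
  have hJnn : 0 ≤ ∫ s in (0:ℝ)..t, σ ‖u s‖ :=
    intervalIntegral.integral_nonneg ht (fun s _ => classK_nonneg hσ.1 (norm_nonneg _))
  have hJr : (∫ s in (0:ℝ)..t, σ ‖u s‖) ≤ r := by
    rw [intervalIntegral.integral_of_le ht]
    calc (∫ s in Set.Ioc 0 t, σ ‖u s‖)
        ≤ ∫ s in Set.Ioc 0 t, max (γ ‖u s‖) (σ ‖u s‖) :=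
          integral_mono_of_nonneg
            (Filter.Eventually.of_forall fun s => classK_nonneg hσ.1 (norm_nonneg _))
            (hui.mono_set Set.Ioc_subset_Ioi_self)
            (Filter.Eventually.of_forall fun s => le_max_right _ _)
      _ ≤ ∫ s in Set.Ioi 0, max (γ ‖u s‖) (σ ‖u s‖) :=
          setIntegral_mono_set hui
            (Filter.Eventually.of_forall fun s =>
              (classK_nonneg hγ.1 (norm_nonneg _)).trans (le_max_left _ _))
            (Set.Ioc_subset_Ioi_self).eventuallyLE
      _ ≤ r := hur
  have hχb : χ (‖ξ‖ + ∫ s in (0:ℝ)..t, σ ‖u s‖) ≤ χ (2 * r) :=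
    classK_le hχ.1 (add_nonneg (norm_nonneg _) hJnn) (by linarith)
  have hkey : α r * (t - τ) ≤ χ (2 * r) :=
    hlow.trans (hII.trans ((hint ξ u t ht).trans hχb))
  have hτT : t - τ ≤ χ (2 * r) / α r := (le_div_iff₀' hαr).mpr hkey
  -- shift the trajectory
  have hXt : X ξ u t = X (X ξ u τ) (fun s => u (s + τ)) (t - τ) := by
    have h := hshift ξ u τ (t - τ) hτ0 (sub_nonneg.mpr hτt)
    rw [show τ + (t - τ) = t by ring] at h
    exact h
  have hb := hfc (X ξ u τ) (fun s => u (s + τ)) (t - τ) (sub_nonneg.mpr hτt)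
  -- the three terms
  have hT0 : 0 ≤ χ (2 * r) / α r :=
    div_nonneg (classK_nonneg hχ.1 (by linarith)) hαr.le
  have h1 : κ₁ (t - τ) ≤ κ₁ (χ (2 * r) / α r) := by
    have := classK_mono hκ₁.1 (Set.mem_Ici.mpr (sub_nonneg.mpr hτt))
      (Set.mem_Ici.mpr hT0) hτT
    exact this
  have h2 : κ₂ ‖X ξ u τ‖ ≤ κ₂ r := classK_le hκ₂.1 (norm_nonneg _) hτr
  -- the γ integral of the shifted input
  have hK : (∫ s in (0:ℝ)..(t - τ), γ ‖u (s + τ)‖) = ∫ s in τ..t, γ ‖u s‖ := by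
    have h := intervalIntegral.integral_comp_add_right (a := 0) (b := t - τ)
      (fun s => γ ‖u s‖) τ
    simpa using h
  have hKnn : 0 ≤ ∫ s in (0:ℝ)..(t - τ), γ ‖u (s + τ)‖ :=
    intervalIntegral.integral_nonneg (sub_nonneg.mpr hτt)
      (fun s _ => classK_nonneg hγ.1 (norm_nonneg _))
  have hKr : (∫ s in (0:ℝ)..(t - τ), γ ‖u (s + τ)‖) ≤ r := by
    rw [hK, intervalIntegral.integral_of_le hτt]
    have hsub : Set.Ioc τ t ⊆ Set.Ioi (0:ℝ) := fun s hs => hτ0.trans_lt hs.1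
    calc (∫ s in Set.Ioc τ t, γ ‖u s‖)
        ≤ ∫ s in Set.Ioc τ t, max (γ ‖u s‖) (σ ‖u s‖) :=
          integral_mono_of_nonneg
            (Filter.Eventually.of_forall fun s => classK_nonneg hγ.1 (norm_nonneg _))
            (hui.mono_set hsub)
            (Filter.Eventually.of_forall fun s => le_max_left _ _)
      _ ≤ ∫ s in Set.Ioi 0, max (γ ‖u s‖) (σ ‖u s‖) :=
          setIntegral_mono_set hui
            (Filter.Eventually.of_forall fun s =>
              (classK_nonneg hγ.1 (norm_nonneg _)).trans (le_max_left _ _))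
            hsub.eventuallyLE
      _ ≤ r := hur
  have h3 : κ₃ (∫ s in (0:ℝ)..(t - τ), γ ‖u (s + τ)‖) ≤ κ₃ r := classK_le hκ₃.1 hKnn hKr
  rw [hXt]
  calc ‖X (X ξ u τ) (fun s => u (s + τ)) (t - τ)‖
      ≤ κ₁ (t - τ) + κ₂ ‖X ξ u τ‖ +
        κ₃ (∫ s in (0:ℝ)..(t - τ), γ ‖u (s + τ)‖) + c := hb
    _ ≤ κ₁ (χ (2 * r) / α r) + κ₂ r + κ₃ r + c := by linarith
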